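/- For every x in (0, π/2), cos^2 x < (163x^4 − 780x^2 + 945)/(13x^4 + 165x^2 + 945). -/

import Mathlib

open Real

private lemma pos_aux (f f' : ℝ → ℝ) (hder : ∀ y : ℝ, HasDerivAt f (f' y) y)
    (h0 : f 0 = 0) (hnn : ∀ y : ℝ, 0 ≤ y → 0 ≤ f' y) {t : ℝ} (ht : 0 ≤ t) :
    0 ≤ f t := by
  have hm : MonotoneOn f (Set.Ici 0) := by
    apply monotoneOn_of_deriv_nonneg (convex_Ici 0)
    · exact fun y _ => (hder y).continuousAt.continuousWithinAt
    · exact fun y hy => (hder y).differentiableAt.differentiableWithinAt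
    · intro y hy
      rw [(hder y).deriv]
      exact hnn y (le_of_lt (by simpa using hy))
  calc (0:ℝ) = f 0 := h0.symm
    _ ≤ f t := hm (by simp) (by simpa using ht) ht

private lemma step_c2 {t : ℝ} (ht : 0 ≤ t) : 1 - t^2/2 ≤ Real.cos t := by
  have := pos_aux (fun t => Real.cos t - (1 - t^2/2)) (fun t => t - Real.sin t)
    (fun y => by
      have h := (Real.hasDerivAt_cos y).sub (((hasDerivAt_pow 2 y).div_const 2).const_sub 1)
      exact h.congr_deriv (by ring))
    (by norm_num)
    (fun y hy => by simpa using Real.sin_le hy) ht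
  linarith [this]

private lemma step_s3 {t : ℝ} (ht : 0 ≤ t) : t - t^3/6 ≤ Real.sin t := by
  have := pos_aux (fun t => Real.sin t - (t - t^3/6))
    (fun t => Real.cos t - (1 - t^2/2))
    (fun y => by
      have h := (Real.hasDerivAt_sin y).sub
        ((hasDerivAt_id y).sub ((hasDerivAt_pow 3 y).div_const 6))
      exact h.congr_deriv (by ring))
    (by norm_num)
    (fun y hy => by simpa using step_c2 hy) ht
  linarith [this]

private lemma step_c4 {t : ℝ} (ht : 0 ≤ t) : Real.cos t ≤ 1 - t^2/2 + t^4/24 := by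
  have := pos_aux (fun t => 1 - t^2/2 + t^4/24 - Real.cos t)
    (fun t => Real.sin t - (t - t^3/6))
    (fun y => by
      have h := ((((hasDerivAt_pow 2 y).div_const 2).const_sub 1).add
        ((hasDerivAt_pow 4 y).div_const 24)).sub (Real.hasDerivAt_cos y)
      exact h.congr_deriv (by ring))
    (by norm_num)
    (fun y hy => by simpa using step_s3 hy) ht
  linarith [this]

private lemma step_s5 {t : ℝ} (ht : 0 ≤ t) : Real.sin t ≤ t - t^3/6 + t^5/120 := by
  have := pos_aux (fun t => t - t^3/6 + t^5/120 - Real.sin t)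
    (fun t => 1 - t^2/2 + t^4/24 - Real.cos t)
    (fun y => by
      have h := (((hasDerivAt_id y).sub ((hasDerivAt_pow 3 y).div_const 6)).add
        ((hasDerivAt_pow 5 y).div_const 120)).sub (Real.hasDerivAt_sin y)
      exact h.congr_deriv (by ring))
    (by norm_num)
    (fun y hy => by simpa using step_c4 hy) ht
  linarith [this]

private lemma step_c6 {t : ℝ} (ht : 0 ≤ t) :
    1 - t^2/2 + t^4/24 - t^6/720 ≤ Real.cos t := by
  have := pos_aux (fun t => Real.cos t - (1 - t^2/2 + t^4/24 - t^6/720))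
    (fun t => t - t^3/6 + t^5/120 - Real.sin t)
    (fun y => by
      have h := (Real.hasDerivAt_cos y).sub
        (((((hasDerivAt_pow 2 y).div_const 2).const_sub 1).add
          ((hasDerivAt_pow 4 y).div_const 24)).sub
          ((hasDerivAt_pow 6 y).div_const 720))
      exact h.congr_deriv (by ring))
    (by norm_num)
    (fun y hy => by simpa using step_s5 hy) ht
  linarith [this]

private lemma step_s7 {t : ℝ} (ht : 0 ≤ t) :
    t - t^3/6 + t^5/120 - t^7/5040 ≤ Real.sin t := by
  have := pos_aux (fun t => Real.sin t - (t - t^3/6 + t^5/120 - t^7/5040))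
    (fun t => Real.cos t - (1 - t^2/2 + t^4/24 - t^6/720))
    (fun y => by
      have h := (Real.hasDerivAt_sin y).sub
        ((((hasDerivAt_id y).sub ((hasDerivAt_pow 3 y).div_const 6)).add
          ((hasDerivAt_pow 5 y).div_const 120)).sub
          ((hasDerivAt_pow 7 y).div_const 5040))
      exact h.congr_deriv (by ring))
    (by norm_num)
    (fun y hy => by simpa using step_c6 hy) ht
  linarith [this]

private lemma step_c8 {t : ℝ} (ht : 0 ≤ t) :
    Real.cos t ≤ 1 - t^2/2 + t^4/24 - t^6/720 + t^8/40320 := by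
  have := pos_aux (fun t => 1 - t^2/2 + t^4/24 - t^6/720 + t^8/40320 - Real.cos t)
    (fun t => Real.sin t - (t - t^3/6 + t^5/120 - t^7/5040))
    (fun y => by
      have h := ((((((hasDerivAt_pow 2 y).div_const 2).const_sub 1).add
        ((hasDerivAt_pow 4 y).div_const 24)).sub
        ((hasDerivAt_pow 6 y).div_const 720)).add
        ((hasDerivAt_pow 8 y).div_const 40320)).sub (Real.hasDerivAt_cos y)
      exact h.congr_deriv (by ring))
    (by norm_num)
    (fun y hy => by simpa using step_s7 hy) ht
  linarith [this]

private lemma step_s9 {t : ℝ} (ht : 0 ≤ t) :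
    Real.sin t ≤ t - t^3/6 + t^5/120 - t^7/5040 + t^9/362880 := by
  have := pos_aux (fun t => t - t^3/6 + t^5/120 - t^7/5040 + t^9/362880 - Real.sin t)
    (fun t => 1 - t^2/2 + t^4/24 - t^6/720 + t^8/40320 - Real.cos t)
    (fun y => by
      have h := (((((hasDerivAt_id y).sub ((hasDerivAt_pow 3 y).div_const 6)).add
        ((hasDerivAt_pow 5 y).div_const 120)).sub
        ((hasDerivAt_pow 7 y).div_const 5040)).add
        ((hasDerivAt_pow 9 y).div_const 362880)).sub (Real.hasDerivAt_sin y)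
      exact h.congr_deriv (by ring))
    (by norm_num)
    (fun y hy => by simpa using step_c8 hy) ht
  linarith [this]

private lemma step_c10 {t : ℝ} (ht : 0 ≤ t) :
    1 - t^2/2 + t^4/24 - t^6/720 + t^8/40320 - t^10/3628800 ≤ Real.cos t := by
  have := pos_aux
    (fun t => Real.cos t - (1 - t^2/2 + t^4/24 - t^6/720 + t^8/40320 - t^10/3628800))
    (fun t => t - t^3/6 + t^5/120 - t^7/5040 + t^9/362880 - Real.sin t)
    (fun y => by
      have hp := (((((hasDerivAt_pow 2 y).div_const 2).const_sub 1).add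
          ((hasDerivAt_pow 4 y).div_const 24)).sub
          ((hasDerivAt_pow 6 y).div_const 720)).add
          ((hasDerivAt_pow 8 y).div_const 40320)
      have h := (Real.hasDerivAt_cos y).sub
        (hp.sub ((hasDerivAt_pow 10 y).div_const 3628800))
      exact h.congr_deriv (by ring))
    (by norm_num)
    (fun y hy => by simpa using step_s9 hy) ht
  linarith [this]

private lemma step_s11 {t : ℝ} (ht : 0 ≤ t) :
    t - t^3/6 + t^5/120 - t^7/5040 + t^9/362880 - t^11/39916800 ≤ Real.sin t := by
  have := pos_aux
    (fun t => Real.sin t - (t - t^3/6 + t^5/120 - t^7/5040 + t^9/362880 - t^11/39916800))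
    (fun t => Real.cos t - (1 - t^2/2 + t^4/24 - t^6/720 + t^8/40320 - t^10/3628800))
    (fun y => by
      have hp := ((((hasDerivAt_id y).sub ((hasDerivAt_pow 3 y).div_const 6)).add
          ((hasDerivAt_pow 5 y).div_const 120)).sub
          ((hasDerivAt_pow 7 y).div_const 5040)).add
          ((hasDerivAt_pow 9 y).div_const 362880)
      have h := (Real.hasDerivAt_sin y).sub
        (hp.sub ((hasDerivAt_pow 11 y).div_const 39916800))
      exact h.congr_deriv (by ring))
    (by norm_num)
    (fun y hy => by simpa using step_c10 hy) ht
  linarith [this]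

private lemma step_c12 {t : ℝ} (ht : 0 ≤ t) :
    Real.cos t ≤ 1 - t^2/2 + t^4/24 - t^6/720 + t^8/40320 - t^10/3628800
      + t^12/479001600 := by
  have := pos_aux
    (fun t => 1 - t^2/2 + t^4/24 - t^6/720 + t^8/40320 - t^10/3628800
      + t^12/479001600 - Real.cos t)
    (fun t => Real.sin t -
      (t - t^3/6 + t^5/120 - t^7/5040 + t^9/362880 - t^11/39916800))
    (fun y => by
      have hp := ((((((hasDerivAt_pow 2 y).div_const 2).const_sub 1).add
        ((hasDerivAt_pow 4 y).div_const 24)).sub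
        ((hasDerivAt_pow 6 y).div_const 720)).add
        ((hasDerivAt_pow 8 y).div_const 40320)).sub
        ((hasDerivAt_pow 10 y).div_const 3628800)
      have h := (hp.add ((hasDerivAt_pow 12 y).div_const 479001600)).sub
        (Real.hasDerivAt_cos y)
      exact h.congr_deriv (by ring))
    (by norm_num)
    (fun y hy => by simpa using step_s11 hy) ht
  linarith [this]

theorem cos_sq_lt_pade (x : ℝ) (hx : 0 < x) (hx2 : x < Real.pi / 2) :
    Real.cos x ^ 2 <
      (163 * x ^ 4 - 780 * x ^ 2 + 945) / (13 * x ^ 4 + 165 * x ^ 2 + 945) := by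
  have hD : (0:ℝ) < 13 * x ^ 4 + 165 * x ^ 2 + 945 := by positivity
  rw [lt_div_iff₀ hD]
  have hcos2 : Real.cos x ^ 2 = 1/2 + Real.cos (2*x)/2 := Real.cos_sq x
  have ht : (0:ℝ) ≤ 2*x := by linarith
  have hP := step_c12 ht
  have hxpi : x < 1.575 := by
    have := Real.pi_lt_d2
    linarith
  set P : ℝ := 1 - (2*x)^2/2 + (2*x)^4/24 - (2*x)^6/720 + (2*x)^8/40320
      - (2*x)^10/3628800 + (2*x)^12/479001600 with hPdef
  clear_value P
  have hx2sq : x^2 < 2.480625 := by nlinarith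
  have hg : (0:ℝ) < 59/315 - 229/10395*x^2 + 16/14175*x^4 - 26/467775*x^6 := by
    nlinarith [sq_nonneg x, sq_nonneg (x^2), sq_nonneg (x^3), pow_pos hx 4,
      mul_pos (mul_pos hx hx) (mul_pos hx hx)]
  have key : 163 * x ^ 4 - 780 * x ^ 2 + 945 - (1/2 + P/2) * (13 * x ^ 4 + 165 * x ^ 2 + 945)
      = x^10 * (59/315 - 229/10395*x^2 + 16/14175*x^4 - 26/467775*x^6) := by
    rw [hPdef]; ring
  have h1 : Real.cos x ^ 2 * (13 * x ^ 4 + 165 * x ^ 2 + 945)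
      ≤ (1/2 + P/2) * (13 * x ^ 4 + 165 * x ^ 2 + 945) := by
    apply mul_le_mul_of_nonneg_right _ hD.le
    rw [hcos2]
    linarith
  have h2 : 0 < x^10 * (59/315 - 229/10395*x^2 + 16/14175*x^4 - 26/467775*x^6) :=
    mul_pos (pow_pos hx 10) hg
  linarith
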